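/- arXiv:1306.3492 — 2 statements merged into one kernel-verified Lean document; each statement's English description precedes it below -/
import Mathlib

section
/- Let n ≥ 3, Q = {1,...,n}, a the n-cycle i ↦ i+1 (a(n)=1), b with b(1)=2 and b(i)=1 for i≥2, and let G = {a^1, ..., a^n} be the cyclic group generated by a. For 1 ≤ j < i ≤ n, the orbits {a^i ∘ b² ∘ a^{n-i} ∘ a^t : 1 ≤ t ≤ n} and {a^j ∘ b² ∘ a^{n-j} ∘ a^t : 1 ≤ t ≤ n} are disjoint. -/
open Fin.CommRing in
/-- On Q = Fin n (n ≥ 3, states relabelled 1,…,n ↦ 0,…,n-1), with a the n-cycle and b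
the given rank-two map, for 1 ≤ j < i ≤ n the orbits (under right multiplication by
powers of a; composition applies the leftmost function first) of a^i ∘ b² ∘ a^{n-i}
and a^j ∘ b² ∘ a^{n-j} are disjoint. -/
theorem stmt_14 (n : ℕ) [NeZero n] (hn : 3 ≤ n) (a b : Fin n → Fin n)
    (ha : ∀ i : Fin n, a i = i + 1)
    (hb0 : b 0 = 1) (hb : ∀ i : Fin n, i ≠ 0 → b i = 0)
    (i j : ℕ) (hj : 1 ≤ j) (hji : j < i) (hi : i ≤ n) :
    Disjoint
      {g : Fin n → Fin n | ∃ t : ℕ, 1 ≤ t ∧ t ≤ n ∧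
        g = a^[t] ∘ (a^[n - i] ∘ (b ∘ b) ∘ a^[i])}
      {g : Fin n → Fin n | ∃ t : ℕ, 1 ≤ t ∧ t ≤ n ∧
        g = a^[t] ∘ (a^[n - j] ∘ (b ∘ b) ∘ a^[j])} := by
  rw [Set.disjoint_left]
  rintro g ⟨t, ht1, htn, rfl⟩ ⟨s, hs1, hsn, heq⟩
  -- iterate of a adds k
  have hak : ∀ (k : ℕ) (x : Fin n), a^[k] x = x + (k : Fin n) := by
    intro k
    induction k with
    | zero => intro x; simp
    | succ m ih =>
        intro x
        rw [Function.iterate_succ_apply', ih, ha]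
        push_cast
        ring
  -- 1 ≠ 0 in Fin n
  have h10 : (1 : Fin n) ≠ 0 := by
    intro h
    have := congrArg Fin.val h
    rw [Fin.val_one', Fin.val_zero, Nat.mod_eq_of_lt (by omega)] at this
    omega
  have hbb : ∀ x : Fin n, b (b x) = if x = 0 then 0 else 1 := by
    intro x
    by_cases hx : x = 0
    · rw [if_pos hx, hx, hb0, hb 1 h10]
    · rw [if_neg hx, hb x hx, hb0]
  -- 2 ≠ 0 in Fin n
  have h2 : (2 : Fin n) ≠ 0 := by
    intro h
    have h2' : ((2 : ℕ) : Fin n) = 2 := by push_cast; ring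
    rw [← h2'] at h
    have := congrArg Fin.val h
    rw [Fin.val_natCast, Fin.val_zero, Nat.mod_eq_of_lt (by omega)] at this
    omega
  -- i ≠ j as elements of Fin n
  have hij : (i : Fin n) ≠ (j : Fin n) := by
    intro h
    have := congrArg Fin.val h
    rw [Fin.val_natCast, Fin.val_natCast] at this
    have hjn : j < n := lt_of_lt_of_le hji hi
    rw [Nat.mod_eq_of_lt hjn] at this
    rcases lt_or_eq_of_le hi with h' | h'
    · rw [Nat.mod_eq_of_lt h'] at this; omega
    · rw [h', Nat.mod_self] at this; omega
  -- the general formula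
  have hform : ∀ (k u : ℕ) (x : Fin n),
      (a^[u] ∘ (a^[n - k] ∘ (b ∘ b) ∘ a^[k])) x
        = (if x + (k : Fin n) = 0 then 0 else 1) + ((n - k : ℕ) : Fin n) + (u : Fin n) := by
    intro k u x
    simp only [Function.comp_apply, hak, hbb]
  have e1 := congrFun heq (-(i : Fin n))
  have e2 := congrFun heq (-(j : Fin n))
  rw [hform, hform] at e1 e2
  rw [if_pos (by ring), if_neg (by intro h; exact hij (by linear_combination -h))] at e1
  rw [if_neg (by intro h; exact hij (by linear_combination h)), if_pos (by ring)] at e2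
  exact h2 (by linear_combination e2 - e1)
end

section
/- Let n ≥ 3, Q = {1,...,n}, a the n-cycle i ↦ i+1 (a(n)=1), b with b(1)=2, b(i)=1 for i≥2. The transformation monoid M generated by a and b has exactly 2n(n+1) elements. -/
namespace Stmt15Aux

variable {n : ℕ} [NeZero n]

/-- The shift x ↦ x + c. -/
def Pm (c : Fin n) : Function.End (Fin n) := fun x => x + c

/-- The map sending s to u and everything else to v. -/
def D (u v s : Fin n) : Function.End (Fin n) := fun x => if x = s then u else v

def near (u v : Fin n) : Prop := u = v ∨ u = v + 1 ∨ v = u + 1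

lemma near_refl (u : Fin n) : near u u := Or.inl rfl

lemma near_symm {u v : Fin n} (h : near u v) : near v u := by
  rcases h with h | h | h
  · exact Or.inl h.symm
  · exact Or.inr (Or.inr h)
  · exact Or.inr (Or.inl h)

lemma Pm_apply (c x : Fin n) : Pm c x = x + c := rfl

lemma D_apply_self (u v s : Fin n) : D u v s s = u := if_pos rfl

lemma D_apply_ne (u v s : Fin n) {x : Fin n} (h : x ≠ s) : D u v s x = v := if_neg h

/-- The submonoid that will be shown to equal the closure. -/
def Msub (n : ℕ) [NeZero n] : Submonoid (Function.End (Fin n)) where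
  carrier := {f | (∃ c, f = Pm c) ∨ ∃ u v s, near u v ∧ f = D u v s}
  one_mem' := Or.inl ⟨0, by funext x; exact (add_zero x).symm⟩
  mul_mem' := by
    rintro f g (⟨c, rfl⟩ | ⟨u, v, s, hne, rfl⟩) (⟨d, rfl⟩ | ⟨u', v', s', hne', rfl⟩)
    · refine Or.inl ⟨d + c, ?_⟩
      funext x
      show (x + d) + c = x + (d + c)
      rw [add_assoc]
    · refine Or.inr ⟨u' + c, v' + c, s', ?_, ?_⟩
      · rcases hne' with h | h | h
        · exact Or.inl (by rw [h])
        · exact Or.inr (Or.inl (by rw [h]; open Fin.CommRing in ring))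
        · exact Or.inr (Or.inr (by rw [h]; open Fin.CommRing in ring))
      · funext x
        show (D u' v' s' x) + c = _
        by_cases hx : x = s'
        · rw [hx, D_apply_self, D_apply_self]
        · rw [D_apply_ne _ _ _ hx, D_apply_ne _ _ _ hx]
    · refine Or.inr ⟨u, v, s - d, hne, ?_⟩
      funext x
      show D u v s (x + d) = _
      by_cases hx : x = s - d
      · rw [hx, sub_add_cancel, D_apply_self, D_apply_self]
      · rw [D_apply_ne _ _ _ (by intro h; apply hx; rw [← h]; open Fin.CommRing in ring),
          D_apply_ne _ _ _ hx]
    · refine Or.inr ⟨(if u' = s then u else v), (if v' = s then u else v), s', ?_, ?_⟩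
      · by_cases hu : u' = s <;> by_cases hv : v' = s <;>
          simp only [if_pos, if_neg, hu, hv, if_true, if_false]
        · exact near_refl u
        · exact hne
        · exact near_symm hne
        · exact near_refl v
      · funext x
        show D u v s (D u' v' s' x) = _
        by_cases hx : x = s'
        · rw [hx, D_apply_self, D_apply_self]
          by_cases hu : u' = s
          · rw [if_pos hu, hu, D_apply_self]
          · rw [if_neg hu, D_apply_ne _ _ _ hu]
        · rw [D_apply_ne _ _ _ hx, D_apply_ne _ _ _ hx]
          by_cases hv : v' = s
          · rw [if_pos hv, hv, D_apply_self]
          · rw [if_neg hv, D_apply_ne _ _ _ hv]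

/-- Indexing map for the elements of the monoid. -/
def phi (n : ℕ) [NeZero n] :
    (Fin n ⊕ Fin n ⊕ (Fin n × Fin n) ⊕ (Fin n × Fin n)) → Function.End (Fin n)
  | .inl c => Pm c
  | .inr (.inl j) => D j j 0
  | .inr (.inr (.inl p)) => D (p.1 + 1) p.1 p.2
  | .inr (.inr (.inr p)) => D p.1 (p.1 + 1) p.2

section Inj

variable (hn : 3 ≤ n)
include hn

lemma one_ne_zero' : (1 : Fin n) ≠ 0 := by
  simp only [ne_eq, Fin.ext_iff, Fin.val_one', Fin.val_zero]
  rw [Nat.mod_eq_of_lt (by omega)]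
  omega

lemma two_ne_zero' : (1 : Fin n) + 1 ≠ 0 := by
  simp only [ne_eq, Fin.ext_iff, Fin.val_add, Fin.val_one', Fin.val_zero]
  rw [Nat.mod_eq_of_lt (show 1 < n by omega), Nat.mod_eq_of_lt (by omega)]
  omega

lemma add_one_ne (x : Fin n) : x + 1 ≠ x := by
  intro h
  exact one_ne_zero' hn (by
    have : x + 1 = x + 0 := by rw [add_zero]; exact h
    exact add_left_cancel this)

lemma add_two_ne (x : Fin n) : x + 1 + 1 ≠ x := by
  intro h
  exact two_ne_zero' hn (by
    have : x + (1 + 1) = x + 0 := by rw [add_zero, ← add_assoc]; exact h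
    exact add_left_cancel this)

lemma Pm_ne_D (c u v s : Fin n) : Pm c ≠ D u v s := by
  intro h
  have e1 := congrFun h (s + 1)
  have e2 := congrFun h (s + 1 + 1)
  rw [Pm_apply, D_apply_ne _ _ _ (add_one_ne hn s)] at e1
  rw [Pm_apply, D_apply_ne _ _ _ (add_two_ne hn s)] at e2
  have e4 : s + 1 + 1 + c = s + 1 + c := e2.trans e1.symm
  exact add_one_ne hn (s + 1) (add_right_cancel e4)

lemma D_eq {u v s u' v' s' : Fin n} (h : D u v s = D u' v' s') :
    (s = s' ∧ u = u' ∧ v = v') ∨ (u = v ∧ u' = v' ∧ u = u') := by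
  by_cases hss : s = s'
  · subst hss
    have e1 := congrFun h s
    rw [D_apply_self, D_apply_self] at e1
    have e2 := congrFun h (s + 1)
    rw [D_apply_ne _ _ _ (add_one_ne hn s), D_apply_ne _ _ _ (add_one_ne hn s)] at e2
    exact Or.inl ⟨rfl, e1, e2⟩
  · have e1 := congrFun h s
    rw [D_apply_self, D_apply_ne _ _ _ hss] at e1
    have e2 := congrFun h s'
    rw [D_apply_ne _ _ _ (Ne.symm hss), D_apply_self] at e2
    -- third point
    have e3 : v = v' := by
      by_cases h3 : s + 1 = s'
      · have := congrFun h (s + 1 + 1)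
        rwa [D_apply_ne _ _ _ (add_two_ne hn s),
          D_apply_ne _ _ _ (by rw [← h3]; exact add_one_ne hn _)] at this
      · have := congrFun h (s + 1)
        rwa [D_apply_ne _ _ _ (add_one_ne hn s), D_apply_ne _ _ _ h3] at this
    refine Or.inr ⟨e1.trans e3.symm, e2.symm.trans e3, ?_⟩
    rw [e1, ← e3, e2]

lemma phi_inj : Function.Injective (phi n) := by
  rintro (c | j | ⟨j, s⟩ | ⟨j, s⟩) (c' | j' | ⟨j', s'⟩ | ⟨j', s'⟩) h <;>
    simp only [phi] at h
  · -- Pm = Pm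
    have := congrFun h 0
    rw [Pm_apply, Pm_apply, zero_add, zero_add] at this
    rw [this]
  · exact absurd h (Pm_ne_D hn _ _ _ _)
  · exact absurd h (Pm_ne_D hn _ _ _ _)
  · exact absurd h (Pm_ne_D hn _ _ _ _)
  · exact absurd h.symm (Pm_ne_D hn _ _ _ _)
  · -- C = C
    rcases D_eq hn h with ⟨_, e, _⟩ | ⟨_, _, e⟩ <;> rw [e]
  · -- C = F
    rcases D_eq hn h with ⟨_, e1, e2⟩ | ⟨_, e, _⟩
    · exact absurd (e1.symm.trans e2) (add_one_ne hn j')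
    · exact absurd e (add_one_ne hn j')
  · -- C = G
    rcases D_eq hn h with ⟨_, e1, e2⟩ | ⟨_, e, _⟩
    · exact absurd (e2.symm.trans e1) (add_one_ne hn j')
    · exact absurd e (Ne.symm (add_one_ne hn j'))
  · exact absurd h.symm (Pm_ne_D hn _ _ _ _)
  · rcases D_eq hn h with ⟨_, e1, e2⟩ | ⟨e, _, _⟩
    · exact absurd (e2.trans e1.symm).symm (add_one_ne hn j)
    · exact absurd e (add_one_ne hn j)
  · -- F = F
    rcases D_eq hn h with ⟨e0, e1, e2⟩ | ⟨e, _, _⟩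
    · rw [e2, e0]
    · exact absurd e (add_one_ne hn j)
  · -- F = G
    rcases D_eq hn h with ⟨_, e1, e2⟩ | ⟨e, _, _⟩
    · -- j + 1 = j' and j = j' + 1
      have : j + 1 + 1 = j := by rw [e1, ← e2]
      exact absurd this (add_two_ne hn j)
    · exact absurd e (add_one_ne hn j)
  · exact absurd h.symm (Pm_ne_D hn _ _ _ _)
  · rcases D_eq hn h with ⟨_, e1, e2⟩ | ⟨e, _, _⟩
    · exact absurd (e1.trans e2.symm).symm (add_one_ne hn j)
    · exact absurd e.symm (add_one_ne hn j)
  · -- G = F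
    rcases D_eq hn h with ⟨_, e1, e2⟩ | ⟨e, _, _⟩
    · have : j + 1 + 1 = j := by rw [e2, ← e1]
      exact absurd this (add_two_ne hn j)
    · exact absurd e.symm (add_one_ne hn j)
  · -- G = G
    rcases D_eq hn h with ⟨e0, e1, e2⟩ | ⟨e, _, _⟩
    · rw [e1, e0]
    · exact absurd e.symm (add_one_ne hn j)

lemma range_phi : Set.range (phi n) = (Msub n : Set (Function.End (Fin n))) := by
  ext f
  constructor
  · rintro ⟨(c | j | ⟨j, s⟩ | ⟨j, s⟩), rfl⟩
    · exact Or.inl ⟨c, rfl⟩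
    · exact Or.inr ⟨j, j, 0, near_refl j, rfl⟩
    · exact Or.inr ⟨j + 1, j, s, Or.inr (Or.inl rfl), rfl⟩
    · exact Or.inr ⟨j, j + 1, s, Or.inr (Or.inr rfl), rfl⟩
  · rintro (⟨c, rfl⟩ | ⟨u, v, s, hne, rfl⟩)
    · exact ⟨.inl c, rfl⟩
    · rcases hne with h | h | h
      · subst h
        refine ⟨.inr (.inl u), ?_⟩
        show D u u 0 = D u u s
        funext x
        show (if x = 0 then u else u) = (if x = s then u else u)
        rw [ite_self, ite_self]
      · subst h
        exact ⟨.inr (.inr (.inl (v, s))), rfl⟩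
      · subst h
        exact ⟨.inr (.inr (.inr (u, s))), rfl⟩

end Inj

end Stmt15Aux

open Stmt15Aux in
/-- On Q = Fin n (n ≥ 3, states relabelled 1,…,n ↦ 0,…,n-1), with a the n-cycle
i ↦ i+1 and b mapping 0 ↦ 1 and everything else to 0, the transformation monoid
generated by a and b has exactly 2n(n+1) elements. -/
theorem stmt_15 (n : ℕ) [NeZero n] (hn : 3 ≤ n) (a b : Function.End (Fin n))
    (ha : ∀ i : Fin n, a i = i + 1)
    (hb0 : b 0 = 1) (hb : ∀ i : Fin n, i ≠ 0 → b i = 0) :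
    Nat.card (Submonoid.closure ({a, b} : Set (Function.End (Fin n)))) =
      2 * n * (n + 1) := by
  have h1 : (1 : Fin n) ≠ 0 := one_ne_zero' hn
  have h2 : (1 : Fin n) + 1 ≠ 0 := two_ne_zero' hn
  have ha' : a = Pm 1 := funext fun x => ha x
  have hb' : b = D 1 0 0 := by
    funext x
    by_cases hx : x = 0
    · rw [hx, hb0, D_apply_self]
    · rw [hb x hx, D_apply_ne _ _ _ hx]
  have hamem : a ∈ Submonoid.closure ({a, b} : Set (Function.End (Fin n))) :=
    Submonoid.subset_closure (Set.mem_insert _ _)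
  have hbmem : b ∈ Submonoid.closure ({a, b} : Set (Function.End (Fin n))) :=
    Submonoid.subset_closure (Set.mem_insert_of_mem _ rfl)
  -- powers of a
  open Fin.CommRing in
  have hpow : ∀ k : ℕ, a ^ k = Pm (k : Fin n) := by
    intro k
    induction k with
    | zero =>
      funext x
      show x = x + ((0 : ℕ) : Fin n)
      rw [Nat.cast_zero, add_zero]
    | succ k ih =>
      rw [pow_succ, ih]
      funext x
      show a x + (k : Fin n) = x + (((k + 1 : ℕ)) : Fin n)
      rw [ha x]
      push_cast
      ring
  have hPmem : ∀ c : Fin n, Pm c ∈ Submonoid.closure ({a, b} : Set (Function.End (Fin n))) := by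
    intro c
    have := pow_mem hamem c.val
    rwa [hpow, Fin.cast_val_eq_self] at this
  -- constants
  have hbab : b * a * b = D 0 0 0 := by
    funext x
    show b (a (b x)) = D 0 0 0 x
    by_cases hx : x = 0
    · rw [hx, hb0, ha, hb _ h2, D_apply_self]
    · rw [hb x hx, ha, zero_add, hb _ h1, D_apply_ne _ _ _ hx]
  have hCmem : ∀ u s : Fin n,
      D u u s ∈ Submonoid.closure ({a, b} : Set (Function.End (Fin n))) := by
    intro u s
    have heq : D u u s = Pm u * (b * a * b) := by
      rw [hbab]
      funext x
      show (if x = s then u else u) = D 0 0 0 x + u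
      rw [ite_self]
      show u = (if x = 0 then (0 : Fin n) else 0) + u
      rw [ite_self, zero_add]
    rw [heq]
    exact mul_mem (hPmem u) (mul_mem (mul_mem hbmem hamem) hbmem)
  have hFmem : ∀ v s : Fin n,
      D (v + 1) v s ∈ Submonoid.closure ({a, b} : Set (Function.End (Fin n))) := by
    intro v s
    have heq : D (v + 1) v s = Pm v * b * Pm (-s) := by
      funext x
      show D (v + 1) v s x = b (x + -s) + v
      by_cases hx : x = s
      · rw [hx, D_apply_self, add_neg_cancel, hb0]
        open Fin.CommRing in ring
      · rw [D_apply_ne _ _ _ hx, hb _ (by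
          rw [← sub_eq_add_neg]
          exact sub_ne_zero.mpr hx), zero_add]
    rw [heq]
    exact mul_mem (mul_mem (hPmem v) hbmem) (hPmem (-s))
  have hGmem : ∀ u s : Fin n,
      D u (u + 1) s ∈ Submonoid.closure ({a, b} : Set (Function.End (Fin n))) := by
    intro u s
    have heq : D u (u + 1) s = Pm u * (b * b) * Pm (-s) := by
      funext x
      show D u (u + 1) s x = b (b (x + -s)) + u
      by_cases hx : x = s
      · rw [hx, D_apply_self, add_neg_cancel, hb0, hb _ h1, zero_add]
      · have h' : x + -s ≠ 0 := by
          rw [← sub_eq_add_neg]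
          exact sub_ne_zero.mpr hx
        rw [D_apply_ne _ _ _ hx, hb (x + -s) h', hb0]
        open Fin.CommRing in ring
    rw [heq]
    exact mul_mem (mul_mem (hPmem u) (mul_mem hbmem hbmem)) (hPmem (-s))
  -- the closure equals Msub
  have hMeq : Submonoid.closure ({a, b} : Set (Function.End (Fin n))) = Msub n := by
    apply le_antisymm
    · rw [Submonoid.closure_le]
      rintro f hf
      rcases hf with rfl | hf
      · exact Or.inl ⟨1, ha'⟩
      · rw [Set.mem_singleton_iff] at hf
        subst hf
        exact Or.inr ⟨1, 0, 0, Or.inr (Or.inl (zero_add 1).symm), hb'⟩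
    · rintro f (⟨c, rfl⟩ | ⟨u, v, s, hne, rfl⟩)
      · exact hPmem c
      · rcases hne with h | h | h
        · subst h; exact hCmem u s
        · subst h; exact hFmem v s
        · subst h; exact hGmem u s
  rw [hMeq]
  have hS : (Msub n : Set (Function.End (Fin n))) = Set.range (phi n) := (range_phi hn).symm
  calc Nat.card (Msub n) = Nat.card (Set.range (phi n)) := by
        rw [← SetLike.coe_sort_coe, hS]
    _ = Nat.card (Fin n ⊕ Fin n ⊕ (Fin n × Fin n) ⊕ (Fin n × Fin n)) :=
        Nat.card_range_of_injective (phi_inj hn)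
    _ = 2 * n * (n + 1) := by
        simp only [Nat.card_eq_fintype_card, Fintype.card_sum, Fintype.card_prod,
          Fintype.card_fin]
        ring
end
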